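/- Each equilibrium coordinate is monotone in the corresponding raw score: with all other raw scores and all parameters fixed, the map ŝ_i ↦ s*_i (where s* is the unique Nash equilibrium) is strictly increasing. -/

import Mathlib

/-- each equilibrium coordinate is strictly increasing in the
corresponding raw score (other raw scores and all parameters fixed). -/
theorem stmt14 (n : ℕ) (hn : 2 ≤ n) (lam shat : Fin n → ℝ) (hlam : ∀ i, 0 < lam i)
    (i : Fin n) :
    ∀ a b : ℝ, a < b →
      ∀ s t : Fin n → ℝ,
        (∀ j : Fin n,
          (1 + lam j) * s j - (∑ k ∈ Finset.univ.erase j, s k) / ((n : ℝ) - 1)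
            = lam j * Function.update shat i a j) →
        (∀ j : Fin n,
          (1 + lam j) * t j - (∑ k ∈ Finset.univ.erase j, t k) / ((n : ℝ) - 1)
            = lam j * Function.update shat i b j) →
        s i < t i := by
  intro a b hab s t hs ht
  have hn2 : (2:ℝ) ≤ (n:ℝ) := by exact_mod_cast hn
  set N : ℝ := (n : ℝ) - 1 with hN
  have hN1 : (1:ℝ) ≤ N := by simp [hN]; linarith
  have hNpos : (0:ℝ) < N := by linarith
  set S : ℝ := (∑ k, t k) - (∑ k, s k) with hS
  -- the difference system
  have key : ∀ j : Fin n, (1 + lam j) * (t j - s j) - (S - (t j - s j)) / N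
      = lam j * (Function.update shat i b j - Function.update shat i a j) := by
    intro j
    have h1 := hs j
    have h2 := ht j
    have e1 : ∑ k ∈ Finset.univ.erase j, s k = (∑ k, s k) - s j :=
      Finset.sum_erase_eq_sub (Finset.mem_univ j)
    have e2 : ∑ k ∈ Finset.univ.erase j, t k = (∑ k, t k) - t j :=
      Finset.sum_erase_eq_sub (Finset.mem_univ j)
    rw [e1] at h1
    rw [e2] at h2
    have d1 := sub_div ((∑ k, s k)) (s j) N
    have d2 := sub_div ((∑ k, t k)) (t j) N
    have d3 := sub_div (S - (t j - s j) + t j - s j + s j) (s j) N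
    rw [hN] at h1 h2 ⊢
    have : (S - (t j - s j)) / N = (∑ k, t k) / ((n:ℝ)-1) - t j / ((n:ℝ)-1)
        - ((∑ k, s k) / ((n:ℝ)-1) - s j / ((n:ℝ)-1)) := by
      rw [hS]
      rw [hN]
      ring
    rw [this]
    linarith
  -- for j ≠ i the raw score difference vanishes
  have hden : ∀ j : Fin n, 0 < N * (1 + lam j) + 1 := by
    intro j
    have := hlam j
    nlinarith
  have hcoord : ∀ j : Fin n, j ≠ i → t j - s j = S / (N * (1 + lam j) + 1) := by
    intro j hj
    have hk := key j
    rw [Function.update_of_ne hj, Function.update_of_ne hj] at hk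
    simp at hk
    have hd := hden j
    have hk2 : (S - (t j - s j)) / N = (1 + lam j) * (t j - s j) := by linarith
    have hk3 : S - (t j - s j) = (1 + lam j) * (t j - s j) * N :=
      (div_eq_iff (ne_of_gt hNpos)).mp hk2
    rw [eq_div_iff (ne_of_gt hd)]
    linear_combination -hk3
  -- the aggregate coefficient
  set c : ℝ := ∑ j ∈ Finset.univ.erase i, 1 / (N * (1 + lam j) + 1) with hc
  have hcnonneg : 0 ≤ c := by
    apply Finset.sum_nonneg
    intro j _
    exact (one_div_pos.mpr (hden j)).le
  have hcard : (Finset.univ.erase i).card = n - 1 := by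
    simp [Finset.card_erase_of_mem]
  have hne : (Finset.univ.erase i).Nonempty := by
    rw [← Finset.card_pos, hcard]
    omega
  have hclt : c < N / (n : ℝ) := by
    have hnpos : (0:ℝ) < (n:ℝ) := by linarith
    have : c < ∑ _j ∈ Finset.univ.erase i, 1 / (n : ℝ) := by
      apply Finset.sum_lt_sum_of_nonempty hne
      intro j _
      apply div_lt_div_of_pos_left one_pos hnpos
      have := hlam j
      nlinarith
    have hcs : ∑ _j ∈ Finset.univ.erase i, 1 / (n : ℝ) = N / (n:ℝ) := by
      rw [Finset.sum_const, hcard, nsmul_eq_mul]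
      have : ((n - 1 : ℕ) : ℝ) = N := by
        rw [hN]
        have : (1:ℕ) ≤ n := by omega
        push_cast [Nat.cast_sub this]
        ring
      rw [this]
      ring
    linarith [this, hcs.le, hcs.ge]
  -- S = (t i - s i) + S * c
  have hsplit : S = (t i - s i) + S * c := by
    have e1 : ∑ k ∈ Finset.univ.erase i, s k = (∑ k, s k) - s i :=
      Finset.sum_erase_eq_sub (Finset.mem_univ i)
    have e2 : ∑ k ∈ Finset.univ.erase i, t k = (∑ k, t k) - t i :=
      Finset.sum_erase_eq_sub (Finset.mem_univ i)
    have : S - (t i - s i) = ∑ j ∈ Finset.univ.erase i, (t j - s j) := by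
      rw [Finset.sum_sub_distrib, e1, e2, hS]
      ring
    have hrw : ∑ j ∈ Finset.univ.erase i, (t j - s j)
        = ∑ j ∈ Finset.univ.erase i, S * (1 / (N * (1 + lam j) + 1)) := by
      apply Finset.sum_congr rfl
      intro j hj
      have hji : j ≠ i := (Finset.mem_erase.mp hj).1
      rw [hcoord j hji]
      field_simp
    rw [hrw, ← Finset.mul_sum, ← hc] at this
    linarith
  -- equation at coordinate i
  have hki := key i
  rw [Function.update_self, Function.update_self] at hki
  have hdi : t i - s i = S * (1 - c) := by linarith [hsplit]
  have hki' : (1 + lam i) * (S * (1 - c)) - (S * c) / N = lam i * (b - a) := by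
    have : S - (t i - s i) = S * c := by linarith [hsplit]
    rw [← hdi, ← this]
    linarith [hki]
  -- positivity of the coefficient K
  have hnpos : (0:ℝ) < (n:ℝ) := by linarith
  have h1c : 1 / (n:ℝ) < 1 - c := by
    have : N / (n:ℝ) = 1 - 1/(n:ℝ) := by
      rw [hN]; field_simp
    linarith [hclt]
  have hcN : c / N < 1 / (n:ℝ) := by
    rw [div_lt_div_iff₀ hNpos hnpos]
    have : c * (n:ℝ) < (N / (n:ℝ)) * (n:ℝ) := by
      apply mul_lt_mul_of_pos_right hclt hnpos
    rw [div_mul_cancel₀] at this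
    · linarith
    · exact ne_of_gt hnpos
  have h1n : (0:ℝ) < 1 / (n:ℝ) := by positivity
  have h1cpos : (0:ℝ) < 1 - c := by linarith
  have hK : 0 < (1 + lam i) * (1 - c) - c / N := by
    have hl := hlam i
    nlinarith [mul_pos hl h1cpos]
  -- conclude
  have hSK : S * ((1 + lam i) * (1 - c) - c / N) = lam i * (b - a) := by
    linear_combination hki'
  have hrhs : 0 < lam i * (b - a) := mul_pos (hlam i) (by linarith)
  have hSpos : 0 < S := by
    by_contra h
    push_neg at h
    have : S * ((1 + lam i) * (1 - c) - c / N) ≤ 0 :=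
      mul_nonpos_of_nonpos_of_nonneg h hK.le
    linarith
  have : 0 < t i - s i := by
    rw [hdi]
    exact mul_pos hSpos h1cpos
  linarith
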